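/- Let P be a set of n ≥ 6 points in the plane in general position, and let C be the center of P. Then C has dimension either 0 or 2. Moreover, if C is 0-dimensional, then C = {p} for a single point p that belongs to P, and n = 3k + 1 for some integer k ≥ 2. -/

import Mathlib

/-- A centerpoint of a finite set `P` of points in `ℝ^d`: every closed halfspace
containing `c` contains at least `⌈|P|/(d+1)⌉` points of `P`. -/
def IsCenterpoint {d : ℕ} (P : Finset (EuclideanSpace ℝ (Fin d)))
    (c : EuclideanSpace ℝ (Fin d)) : Prop :=
  ∀ (f : EuclideanSpace ℝ (Fin d) →ₗ[ℝ] ℝ) (a : ℝ), f ≠ 0 → a ≤ f c →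
    ⌈(P.card : ℚ) / (d + 1)⌉₊ ≤ (P.filter fun q => a ≤ f q).card

/-- The dimension of a subset of `ℝ^d`: the rank of the direction of its affine span. -/
noncomputable def setDim {d : ℕ} (S : Set (EuclideanSpace ℝ (Fin d))) : ℕ :=
  Module.finrank ℝ (affineSpan ℝ S).direction


open Finset Module RealInnerProductSpace

noncomputable section CenterAux

abbrev E2 := EuclideanSpace ℝ (Fin 2)

/-- min of `⟪u, q⟫` over a finset (junk value 0 for empty). -/
noncomputable def infV (T : Finset E2) (u : E2) : ℝ :=
  if hT : T.Nonempty then T.inf' hT (fun q => ⟪u, q⟫) else 0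

/-- the `k`-th largest value of `⟪u, q⟫` over `q ∈ P`. -/
noncomputable def hfun (P : Finset E2) (k : ℕ) (u : E2) : ℝ :=
  if hS : (P.powersetCard k).Nonempty then (P.powersetCard k).sup' hS (fun T => infV T u)
  else 0

theorem my_continuous_sup' {ι X : Type*} [TopologicalSpace X] (s : Finset ι) (hs : s.Nonempty)
    (f : ι → X → ℝ) (hf : ∀ i ∈ s, Continuous (f i)) :
    Continuous fun u => s.sup' hs (fun i => f i u) := by
  induction hs using Finset.Nonempty.cons_induction with
  | singleton a =>
      have he : (fun u => Finset.sup' {a} (Finset.singleton_nonempty a) fun i => f i u) = f a := by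
        funext u; exact Finset.sup'_singleton ..
      rw [he]; exact hf a (Finset.mem_singleton_self a)
  | cons a s ha hs ih =>
      simp only [Finset.sup'_cons hs]
      exact Continuous.max (hf a (by simp)) (ih fun i hi => hf i (by simp [hi]))

theorem my_continuous_inf' {ι X : Type*} [TopologicalSpace X] (s : Finset ι) (hs : s.Nonempty)
    (f : ι → X → ℝ) (hf : ∀ i ∈ s, Continuous (f i)) :
    Continuous fun u => s.inf' hs (fun i => f i u) := by
  induction hs using Finset.Nonempty.cons_induction with
  | singleton a =>
      have he : (fun u => Finset.inf' {a} (Finset.singleton_nonempty a) fun i => f i u) = f a := by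
        funext u; exact Finset.inf'_singleton ..
      rw [he]; exact hf a (Finset.mem_singleton_self a)
  | cons a s ha hs ih =>
      simp only [Finset.inf'_cons hs]
      exact Continuous.min (hf a (by simp)) (ih fun i hi => hf i (by simp [hi]))

theorem continuous_infV (T : Finset E2) (hT : T.Nonempty) : Continuous (infV T) := by
  have : infV T = fun u => T.inf' hT (fun q => ⟪u, q⟫) := by
    funext u; rw [infV, dif_pos hT]
  rw [this]
  exact my_continuous_inf' T hT _ (fun q _ => continuous_id.inner continuous_const)

theorem continuous_hfun (P : Finset E2) (k : ℕ) (hk1 : 1 ≤ k) (hkP : k ≤ P.card) :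
    Continuous (hfun P k) := by
  have hS : (P.powersetCard k).Nonempty := (Finset.powersetCard_nonempty).2 hkP
  have : hfun P k = fun u => (P.powersetCard k).sup' hS (fun T => infV T u) := by
    funext u; rw [hfun, dif_pos hS]
  rw [this]
  refine my_continuous_sup' _ hS _ (fun T hT => continuous_infV T ?_)
  rw [Finset.mem_powersetCard] at hT
  exact Finset.card_pos.1 (hT.2 ▸ hk1)

theorem le_hfun (P : Finset E2) (k : ℕ) (hk1 : 1 ≤ k) {T : Finset E2} (hTP : T ⊆ P)
    (hTc : T.card = k) {u : E2} {a : ℝ} (h : ∀ q ∈ T, a ≤ ⟪u, q⟫) :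
    a ≤ hfun P k u := by
  have hTne : T.Nonempty := Finset.card_pos.1 (hTc ▸ hk1)
  have hS : (P.powersetCard k).Nonempty := ⟨T, Finset.mem_powersetCard.2 ⟨hTP, hTc⟩⟩
  rw [hfun, dif_pos hS]
  refine le_trans ?_ (Finset.le_sup' _ (Finset.mem_powersetCard.2 ⟨hTP, hTc⟩))
  rw [infV, dif_pos hTne]
  exact Finset.le_inf' _ _ h

theorem exists_of_le_hfun (P : Finset E2) (k : ℕ) (hk1 : 1 ≤ k) (hkP : k ≤ P.card)
    {u : E2} {a : ℝ} (h : a ≤ hfun P k u) :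
    ∃ T : Finset E2, T ⊆ P ∧ T.card = k ∧ ∀ q ∈ T, a ≤ ⟪u, q⟫ := by
  have hS : (P.powersetCard k).Nonempty := (Finset.powersetCard_nonempty).2 hkP
  rw [hfun, dif_pos hS] at h
  obtain ⟨T, hT, hval⟩ := Finset.exists_mem_eq_sup' hS (fun T => infV T u)
  rw [Finset.mem_powersetCard] at hT
  have hTne : T.Nonempty := Finset.card_pos.1 (hT.2 ▸ hk1)
  refine ⟨T, hT.1, hT.2, fun q hq => ?_⟩
  calc a ≤ infV T u := hval ▸ h
    _ ≤ ⟪u, q⟫ := by rw [infV, dif_pos hTne]; exact Finset.inf'_le _ hq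

theorem count_lt_of_hfun_le (P : Finset E2) (k : ℕ) (hk1 : 1 ≤ k) {u : E2} {t : ℝ}
    (h : hfun P k u ≤ t) :
    (P.filter fun q => t < ⟪u, q⟫).card < k := by
  by_contra hcon
  push_neg at hcon
  obtain ⟨T, hT, hTc⟩ := Finset.exists_subset_card_eq hcon
  have hTne : T.Nonempty := Finset.card_pos.1 (hTc ▸ hk1)
  have hgt : ∀ q ∈ T, t < ⟪u, q⟫ := fun q hq => (Finset.mem_filter.1 (hT hq)).2
  have : T.inf' hTne (fun q => ⟪u, q⟫) ≤ t := by
    refine le_trans (le_hfun P k hk1 (hT.trans (Finset.filter_subset _ _)) hTc ?_) h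
    exact fun q hq => Finset.inf'_le _ hq
  obtain ⟨q, hq, hval⟩ := Finset.exists_mem_eq_inf' hTne (fun q => ⟪u, q⟫)
  rw [hval] at this
  exact absurd (lt_of_lt_of_le (hgt q hq) this) (lt_irrefl t)

theorem riesz_rep (f : E2 →ₗ[ℝ] ℝ) : ∃ v : E2, ∀ x, f x = ⟪v, x⟫ := by
  refine ⟨(InnerProductSpace.toDual ℝ E2).symm (LinearMap.toContinuousLinearMap f), fun x => ?_⟩
  rw [InnerProductSpace.toDual_symm_apply]
  rfl

end CenterAux



theorem isCenterpoint_def (P : Finset E2) (k : ℕ) (hkc : ⌈(P.card : ℚ) / 3⌉₊ = k) (x : E2) :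
    IsCenterpoint P x ↔ ∀ (f : E2 →ₗ[ℝ] ℝ) (a : ℝ), f ≠ 0 → a ≤ f x →
      k ≤ (P.filter fun q => a ≤ f q).card := by
  unfold IsCenterpoint
  norm_num [hkc]

theorem k_facts (n : ℕ) (_h6 : 6 ≤ n) :
    n ≤ 3 * ⌈(n : ℚ) / 3⌉₊ ∧ 3 * ⌈(n : ℚ) / 3⌉₊ ≤ n + 2 := by
  constructor
  · have h := Nat.le_ceil ((n : ℚ) / 3)
    have : (n : ℚ) ≤ 3 * (⌈(n : ℚ) / 3⌉₊ : ℚ) := by linarith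
    exact_mod_cast this
  · have h3 : n ≤ 3 * ((n + 2) / 3) := by omega
    have : ⌈(n : ℚ) / 3⌉₊ ≤ (n + 2) / 3 := by
      rw [Nat.ceil_le]
      rw [div_le_iff₀ (by norm_num)]
      have : (n : ℚ) ≤ ((3 * ((n + 2) / 3) : ℕ) : ℚ) := by exact_mod_cast h3
      push_cast at this ⊢
      linarith
    omega

theorem isCenterpoint_iff_hfun (P : Finset E2) (k : ℕ) (hkc : ⌈(P.card : ℚ) / 3⌉₊ = k)
    (hk1 : 1 ≤ k) (hkP : k ≤ P.card) (x : E2) :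
    IsCenterpoint P x ↔ ∀ u : E2, ‖u‖ = 1 → ⟪u, x⟫ ≤ hfun P k u := by
  rw [isCenterpoint_def P k hkc]
  constructor
  · intro h u hu
    set f : E2 →ₗ[ℝ] ℝ := (innerSL ℝ u).toLinearMap with hfdef
    have hfq : ∀ q, f q = ⟪u, q⟫ := fun q => rfl
    have hf0 : f ≠ 0 := by
      intro h0
      have h1 := LinearMap.congr_fun h0 u
      rw [hfq, real_inner_self_eq_norm_sq, hu] at h1
      norm_num at h1
    have hcard := h f ⟪u, x⟫ hf0 (le_of_eq (hfq x).symm)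
    obtain ⟨T, hT, hTc⟩ := Finset.exists_subset_card_eq hcard
    refine le_hfun P k hk1 (hT.trans (Finset.filter_subset _ _)) hTc (fun q hq => ?_)
    have h2 := (Finset.mem_filter.1 (hT hq)).2
    rwa [hfq] at h2
  · intro h f a hf0 hax
    obtain ⟨v, hv⟩ := riesz_rep f
    have hv0 : v ≠ 0 := by
      intro h0
      apply hf0
      ext y
      rw [hv, h0, inner_zero_left]
      rfl
    have hvpos : (0:ℝ) < ‖v‖ := norm_pos_iff.2 hv0
    set u : E2 := ‖v‖⁻¹ • v with hu
    have hun : ‖u‖ = 1 := by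
      rw [hu, norm_smul, norm_inv, norm_norm, inv_mul_cancel₀ (ne_of_gt hvpos)]
    have hux : ∀ y : E2, ⟪u, y⟫ = ‖v‖⁻¹ * f y := by
      intro y; rw [hu, real_inner_smul_left, ← hv]
    obtain ⟨T, hTP, hTc, hT⟩ := exists_of_le_hfun P k hk1 hkP (h u hun)
    have hsub : T ⊆ P.filter fun q => a ≤ f q := by
      intro q hq
      rw [Finset.mem_filter]
      refine ⟨hTP hq, ?_⟩
      have h1 := hT q hq
      rw [hux, hux] at h1
      have h2 : f x ≤ f q := by
        have h3 := mul_le_mul_of_nonneg_left h1 (le_of_lt hvpos)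
        rw [← mul_assoc, ← mul_assoc, mul_inv_cancel₀ (ne_of_gt hvpos), one_mul, one_mul] at h3
        exact h3
      linarith
    calc k = T.card := hTc.symm
      _ ≤ _ := Finset.card_le_card hsub

theorem collinear_of_inner_eq (w : E2) (hw : w ≠ 0) (t : ℝ) (s : Set E2)
    (hs : ∀ x ∈ s, ⟪w, x⟫ = t) : Collinear ℝ s := by
  rw [collinear_iff_rank_le_one]
  have hle : vectorSpan ℝ s ≤ (Submodule.span ℝ {w})ᗮ := by
    rw [vectorSpan_def, Submodule.span_le]
    intro x hx
    obtain ⟨p, hp, q, hq, rfl⟩ := Set.mem_vsub.1 hx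
    rw [SetLike.mem_coe, Submodule.mem_orthogonal_singleton_iff_inner_right]
    show ⟪w, p - q⟫ = 0
    rw [inner_sub_right, hs p hp, hs q hq, sub_self]
  haveI : Fact (finrank ℝ E2 = 1 + 1) := ⟨by simp [finrank_euclideanSpace_fin]⟩
  have hW : finrank ℝ ((Submodule.span ℝ {w})ᗮ) = 1 := Submodule.finrank_orthogonal_span_singleton hw
  have hmono := Submodule.rank_mono (R := ℝ) hle
  have hrk : Module.rank ℝ ((Submodule.span ℝ ({w} : Set E2))ᗮ) = 1 := by
    rw [← Module.finrank_eq_rank, hW]; norm_num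
  rw [hrk] at hmono
  exact hmono

theorem three_collinear_false (P : Finset E2)
    (hgp : ∀ p ∈ P, ∀ q ∈ P, ∀ r ∈ P, p ≠ q → p ≠ r → q ≠ r →
      AffineIndependent ℝ ![p, q, r])
    (w : E2) (hw : w ≠ 0) (t : ℝ)
    (h3 : 3 ≤ (P.filter fun q => ⟪w, q⟫ = t).card) : False := by
  classical
  obtain ⟨T, hT, hTc⟩ := Finset.exists_subset_card_eq h3
  obtain ⟨a, b, c, hab, hac, hbc, rfl⟩ := Finset.card_eq_three.1 hTc
  have hmem : ∀ y ∈ ({a,b,c} : Finset E2), y ∈ P ∧ ⟪w, y⟫ = t :=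
    fun y hy => Finset.mem_filter.1 (hT hy)
  have ha := hmem a (by simp)
  have hb := hmem b (by simp)
  have hc := hmem c (by simp)
  have hai := hgp a ha.1 b hb.1 c hc.1 hab hac hbc
  rw [affineIndependent_iff_not_collinear_set] at hai
  apply hai
  apply collinear_of_inner_eq w hw t
  intro x hx
  simp only [Set.mem_insert_iff, Set.mem_singleton_iff] at hx
  rcases hx with rfl|rfl|rfl
  · exact ha.2
  · exact hb.2
  · exact hc.2

theorem antipodal_false (P : Finset E2) (n : ℕ) (hn : P.card = n) (h6 : 6 ≤ n)
    (hgp : ∀ p ∈ P, ∀ q ∈ P, ∀ r ∈ P, p ≠ q → p ≠ r → q ≠ r →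
      AffineIndependent ℝ ![p, q, r])
    (k : ℕ) (hk1 : 1 ≤ k) (hn3 : n ≤ 3 * k) (h3k : 3 * k ≤ n + 2)
    (w : E2) (hw : ‖w‖ = 1) (t : ℝ)
    (h1 : hfun P k w ≤ t) (h2 : hfun P k (-w) ≤ -t) : False := by
  classical
  have c1 := count_lt_of_hfun_le P k hk1 h1
  have c2' := count_lt_of_hfun_le P k hk1 h2
  have hfe : (P.filter fun q => -t < ⟪-w, q⟫) = P.filter fun q => ⟪w, q⟫ < t := by
    apply Finset.filter_congr
    intro q _
    rw [inner_neg_left]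
    simp only [neg_lt_neg_iff]
  rw [hfe] at c2'
  have hcover : P ⊆ (P.filter fun q => ⟪w,q⟫ < t) ∪
      ((P.filter fun q => ⟪w,q⟫ = t) ∪ (P.filter fun q => t < ⟪w,q⟫)) := by
    intro q hq
    rcases lt_trichotomy (⟪w,q⟫) t with h|h|h
    · exact Finset.mem_union_left _ (Finset.mem_filter.2 ⟨hq, h⟩)
    · exact Finset.mem_union_right _ (Finset.mem_union_left _ (Finset.mem_filter.2 ⟨hq, h⟩))
    · exact Finset.mem_union_right _ (Finset.mem_union_right _ (Finset.mem_filter.2 ⟨hq, h⟩))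
  have hcc := Finset.card_le_card hcover
  have hu1 := Finset.card_union_le (P.filter fun q => ⟪w,q⟫ < t)
      ((P.filter fun q => ⟪w,q⟫ = t) ∪ (P.filter fun q => t < ⟪w,q⟫))
  have hu2 := Finset.card_union_le (P.filter fun q => ⟪w,q⟫ = t) (P.filter fun q => t < ⟪w,q⟫)
  have h3 : 3 ≤ (P.filter fun q => ⟪w,q⟫ = t).card := by omega
  exact three_collinear_false P hgp w
    (by intro h0; rw [h0] at hw; simp at hw) t h3


theorem can_move (P : Finset E2) (k : ℕ) (hkc : ⌈(P.card : ℚ) / 3⌉₊ = k) (hk1 : 1 ≤ k)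
    (hkP : k ≤ P.card) (p v : E2) (hp : IsCenterpoint P p) (hv : ‖v‖ = 1)
    (h : ∀ u : E2, ‖u‖ = 1 → hfun P k u = ⟪u, p⟫ → ⟪u, v⟫ < 0) :
    ∃ ε : ℝ, 0 < ε ∧ IsCenterpoint P (p + ε • v) := by
  have hmem := (isCenterpoint_iff_hfun P k hkc hk1 hkP p).1 hp
  set K : Set E2 := Metric.sphere 0 1 ∩ {u | 0 ≤ ⟪u, v⟫} with hK
  have hKcomp : IsCompact K :=
    (isCompact_sphere 0 1).inter_right
      (isClosed_le continuous_const (continuous_id.inner continuous_const))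
  have hvK : v ∈ K := by
    constructor
    · simpa [mem_sphere_zero_iff_norm] using hv
    · simp only [Set.mem_setOf_eq, real_inner_self_eq_norm_sq, hv]
      norm_num
  set g : E2 → ℝ := fun u => hfun P k u - ⟪u, p⟫ with hg
  have hgc : ContinuousOn g K :=
    ((continuous_hfun P k hk1 hkP).sub (continuous_id.inner continuous_const)).continuousOn
  obtain ⟨u₀, hu₀K, hmin⟩ := hKcomp.exists_isMinOn ⟨v, hvK⟩ hgc
  have hnorm : ∀ u ∈ K, ‖u‖ = 1 := by
    intro u hu
    have h1 := hu.1
    rwa [mem_sphere_zero_iff_norm] at h1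
  have hδ : 0 < g u₀ := by
    have h1 : ⟪u₀, p⟫ ≤ hfun P k u₀ := hmem u₀ (hnorm u₀ hu₀K)
    rcases eq_or_lt_of_le h1 with he | hlt
    · exact absurd (h u₀ (hnorm u₀ hu₀K) he.symm) (not_lt.2 hu₀K.2)
    · simpa [hg] using sub_pos.2 hlt
  refine ⟨g u₀, hδ, ?_⟩
  rw [isCenterpoint_iff_hfun P k hkc hk1 hkP]
  intro u hu
  have hup : ⟪u, p⟫ ≤ hfun P k u := hmem u hu
  rw [inner_add_right, real_inner_smul_right]
  by_cases hcase : 0 ≤ ⟪u, v⟫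
  · have huK : u ∈ K := ⟨by simpa [mem_sphere_zero_iff_norm] using hu, hcase⟩
    have h1 : g u₀ ≤ g u := isMinOn_iff.1 hmin u huK
    have h2 : ⟪u, v⟫ ≤ 1 := by
      have h3 := real_inner_le_norm u v
      rw [hu, hv] at h3
      linarith
    have h4 : g u₀ = hfun P k u₀ - ⟪u₀, p⟫ := rfl
    have h5 : g u = hfun P k u - ⟪u, p⟫ := rfl
    nlinarith [hδ, h4, mul_nonneg (le_of_lt hδ) (sub_nonneg.2 h2)]
  · push_neg at hcase
    nlinarith [hδ, mul_pos hδ (neg_pos.2 hcase)]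

theorem exists_centerpoint (P : Finset E2) (n : ℕ) (hn : P.card = n) (_h6 : 6 ≤ n)
    (k : ℕ) (hkc : ⌈(P.card : ℚ) / 3⌉₊ = k) (hk1 : 1 ≤ k) (hn3 : n ≤ 3 * k)
    (h3k : 3 * k ≤ n + 2) :
    ∃ c : E2, IsCenterpoint P c := by
  classical
  set r : ℕ := n - k + 1 with hr
  have hkn : k ≤ n := by omega
  have hfr : finrank ℝ E2 = 2 := finrank_euclideanSpace_fin
  set s : Finset (Finset E2) := P.powersetCard r with hs
  have hinter : ∀ I ⊆ s, I.card ≤ finrank ℝ E2 + 1 →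
      (⋂ S ∈ I, (convexHull ℝ (S : Set E2))).Nonempty := by
    intro I hIs hIcard
    rw [hfr] at hIcard
    have hGne : (P.filter fun x => ∀ S ∈ I, x ∈ S).Nonempty := by
      by_contra hemp
      rw [Finset.not_nonempty_iff_eq_empty] at hemp
      have hsub : P.filter (fun x => ¬ ∀ S ∈ I, x ∈ S) ⊆ I.biUnion fun S => P \ S := by
        intro x hx
        rw [Finset.mem_filter] at hx
        obtain ⟨hxP, hx2⟩ := hx
        push_neg at hx2
        obtain ⟨S, hSI, hxS⟩ := hx2
        exact Finset.mem_biUnion.2 ⟨S, hSI, Finset.mem_sdiff.2 ⟨hxP, hxS⟩⟩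
      have hcard1 : (P.filter (fun x => ¬ ∀ S ∈ I, x ∈ S)).card = n := by
        have hsplit := Finset.card_filter_add_card_filter_not
          (s := P) (p := fun x => ∀ S ∈ I, x ∈ S)
        rw [hemp] at hsplit
        simp only [Finset.card_empty, zero_add] at hsplit
        omega
      have hbound : (I.biUnion fun S => P \ S).card ≤ I.card * (k-1) := by
        refine le_trans Finset.card_biUnion_le ?_
        have hstep : ∀ S ∈ I, (P \ S).card ≤ k - 1 := by
          intro S hS
          have hSmem := Finset.mem_powersetCard.1 (hIs hS)
          rw [Finset.card_sdiff_of_subset hSmem.1, hn, hSmem.2]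
          omega
        calc ∑ S ∈ I, (P \ S).card ≤ ∑ _S ∈ I, (k-1) := Finset.sum_le_sum hstep
          _ = I.card * (k-1) := by rw [Finset.sum_const, smul_eq_mul]
      have hle3 : I.card * (k-1) ≤ 3 * (k-1) := Nat.mul_le_mul_right _ hIcard
      have hfin := Finset.card_le_card hsub
      omega
    obtain ⟨x, hx⟩ := hGne
    rw [Finset.mem_filter] at hx
    refine ⟨x, ?_⟩
    apply Set.mem_iInter₂.2
    intro S hS
    exact subset_convexHull ℝ _ (hx.2 S hS)
  have hconv : ∀ S ∈ s, Convex ℝ (convexHull ℝ (S:Set E2)) := fun S _ => convex_convexHull ℝ _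
  obtain ⟨c, hc⟩ := Convex.helly_theorem'
    (F := fun S : Finset E2 => convexHull ℝ (S : Set E2)) (s := s) hconv hinter
  refine ⟨c, ?_⟩
  rw [isCenterpoint_def P k hkc]
  intro f a hf0 hac
  by_contra hcon
  push_neg at hcon
  have hS0 : r ≤ (P.filter fun q => ¬ a ≤ f q).card := by
    have hsplit := Finset.card_filter_add_card_filter_not
      (s := P) (p := fun q => a ≤ f q)
    omega
  obtain ⟨S', hS'sub, hS'c⟩ := Finset.exists_subset_card_eq hS0
  have hS's : S' ∈ s := Finset.mem_powersetCard.2 ⟨hS'sub.trans (Finset.filter_subset _ _), hS'c⟩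
  have hcS' : c ∈ convexHull ℝ (S' : Set E2) := Set.mem_iInter₂.1 hc S' hS's
  have hhalf : convexHull ℝ (S' : Set E2) ⊆ {x | f x < a} := by
    apply convexHull_min
    · intro q hq
      have hq2 := (Finset.mem_filter.1 (hS'sub (Finset.mem_coe.1 hq))).2
      simp only [Set.mem_setOf_eq]
      exact lt_of_not_ge hq2
    · exact convex_halfSpace_lt ⟨f.map_add, f.map_smul⟩ a
  have hfc := hhalf hcS'
  simp only [Set.mem_setOf_eq] at hfc
  linarith


theorem unit_eq_or_neg {W : Submodule ℝ E2} (hW : finrank ℝ W = 1) {u w : E2}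
    (huW : u ∈ W) (hwW : w ∈ W) (hu : ‖u‖ = 1) (hw : ‖w‖ = 1) : u = w ∨ u = -w := by
  have hw0 : w ≠ 0 := by
    intro h0; rw [h0] at hw; simp at hw
  have hspan : Submodule.span ℝ ({w} : Set E2) = W := by
    apply Submodule.eq_of_le_of_finrank_le
    · rw [Submodule.span_le]
      simpa using hwW
    · rw [hW, finrank_span_singleton hw0]
  have huspan : u ∈ Submodule.span ℝ ({w} : Set E2) := hspan ▸ huW
  obtain ⟨c, hc⟩ := Submodule.mem_span_singleton.1 huspan
  have habs : |c| = 1 := by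
    have h1 := congrArg norm hc
    rw [norm_smul, hw, mul_one, hu, Real.norm_eq_abs] at h1
    exact h1
  rcases abs_eq (by norm_num : (0:ℝ) ≤ 1) |>.1 habs with h1 | h1
  · left; rw [← hc, h1, one_smul]
  · right; rw [← hc, h1, neg_smul, one_smul]

theorem isCompact_convexHull_E2 {T : Set E2} (hT : IsCompact T) :
    IsCompact (convexHull ℝ T) := by
  classical
  set Φ : (Fin 3 → ℝ) × (Fin 3 → E2) → E2 := fun p => ∑ i, p.1 i • p.2 i with hΦ
  have hcont : Continuous Φ := by
    apply continuous_finset_sum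
    intro i _
    exact ((continuous_apply i).comp continuous_fst).smul
      ((continuous_apply i).comp continuous_snd)
  set K : Set ((Fin 3 → ℝ) × (Fin 3 → E2)) :=
    stdSimplex ℝ (Fin 3) ×ˢ Set.univ.pi (fun _ => T) with hKdef
  have hKcomp : IsCompact K := (isCompact_stdSimplex _ _).prod (isCompact_univ_pi fun _ => hT)
  have himg : convexHull ℝ T = Φ '' K := by
    apply Set.Subset.antisymm
    · intro x hx
      rw [convexHull_eq_union] at hx
      simp only [Set.mem_iUnion] at hx
      obtain ⟨t, htT, hta, hxt⟩ := hx
      have hcard : t.card ≤ 3 := by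
        have h1 := hta.card_le_finrank_succ
        have h2 : finrank ℝ (vectorSpan ℝ (Set.range (Subtype.val : t → E2))) ≤ 2 := by
          have h3 := Submodule.finrank_le (vectorSpan ℝ (Set.range (Subtype.val : t → E2)))
          rwa [finrank_euclideanSpace_fin] at h3
        rw [Fintype.card_coe] at h1
        omega
      rw [Finset.convexHull_eq] at hxt
      obtain ⟨w, hw0, hw1, hwx⟩ := hxt
      rw [Finset.centerMass_eq_of_sum_1 _ _ hw1] at hwx
      simp only [id_eq] at hwx
      have htne : t.Nonempty := by
        rcases Finset.eq_empty_or_nonempty t with rfl | hne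
        · simp at hw1
        · exact hne
      have hmemT : ∀ y ∈ t, y ∈ T := fun y hy => htT (Finset.mem_coe.2 hy)
      have hc123 : t.card = 1 ∨ t.card = 2 ∨ t.card = 3 := by
        have := Finset.Nonempty.card_pos htne
        omega
      rcases hc123 with hc | hc | hc
      · obtain ⟨a, rfl⟩ := Finset.card_eq_one.1 hc
        simp only [Finset.sum_singleton] at hwx hw1
        refine ⟨(![w a, 0, 0], ![a, a, a]), ⟨⟨?_, ?_⟩, fun i _ => ?_⟩, ?_⟩
        · intro i; fin_cases i <;> simp [hw0 a (Finset.mem_singleton_self a)]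
        · simp [Fin.sum_univ_three, hw1]
        · fin_cases i <;> simp [hmemT a (Finset.mem_singleton_self a)]
        · simp only [hΦ, Fin.sum_univ_three]
          simp [hwx]
      · obtain ⟨a, b, hab, rfl⟩ := Finset.card_eq_two.1 hc
        rw [Finset.sum_pair hab] at hwx hw1
        have haM : a ∈ ({a, b} : Finset E2) := by simp
        have hbM : b ∈ ({a, b} : Finset E2) := by simp
        refine ⟨(![w a, w b, 0], ![a, b, b]), ⟨⟨?_, ?_⟩, fun i _ => ?_⟩, ?_⟩
        · intro i; fin_cases i <;> simp [hw0 a haM, hw0 b hbM]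
        · simp [Fin.sum_univ_three, hw1]
        · fin_cases i <;> simp [hmemT a haM, hmemT b hbM]
        · simp only [hΦ, Fin.sum_univ_three]
          simp [hwx]
      · obtain ⟨a, b, c, hab, hac, hbc, rfl⟩ := Finset.card_eq_three.1 hc
        have hanm : a ∉ ({b, c} : Finset E2) := by simp [hab, hac]
        rw [Finset.sum_insert hanm, Finset.sum_pair hbc] at hwx hw1
        have haM : a ∈ ({a, b, c} : Finset E2) := by simp
        have hbM : b ∈ ({a, b, c} : Finset E2) := by simp
        have hcM : c ∈ ({a, b, c} : Finset E2) := by simp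
        refine ⟨(![w a, w b, w c], ![a, b, c]), ⟨⟨?_, ?_⟩, fun i _ => ?_⟩, ?_⟩
        · intro i; fin_cases i <;> simp [hw0 a haM, hw0 b hbM, hw0 c hcM]
        · simp only [Fin.sum_univ_three, Matrix.cons_val_zero, Matrix.cons_val_one,
            Matrix.head_cons, Matrix.cons_val_two, Matrix.tail_cons]
          linarith [hw1]
        · fin_cases i <;> simp [hmemT a haM, hmemT b hbM, hmemT c hcM]
        · simp only [hΦ, Fin.sum_univ_three]
          simp [← hwx, add_assoc]
    · rintro x ⟨⟨w, f⟩, hwf, rfl⟩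
      obtain ⟨hw, hf⟩ := hwf
      exact Convex.sum_mem (convex_convexHull ℝ T) (fun i _ => hw.1 i) hw.2
        (fun i _ => subset_convexHull ℝ T (hf i (Set.mem_univ i)))
  rw [himg]
  exact hKcomp.image hcont


theorem center_convex (P : Finset E2) : Convex ℝ {c : E2 | IsCenterpoint P c} := by
  intro c₁ h₁ c₂ h₂ α β hα hβ hαβ
  simp only [Set.mem_setOf_eq] at h₁ h₂ ⊢
  intro f a hf0 hax
  have hfc : f (α • c₁ + β • c₂) = α * f c₁ + β * f c₂ := by
    rw [f.map_add, f.map_smul, f.map_smul]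
    rfl
  rw [hfc] at hax
  by_cases hcmp : f c₁ ≤ f c₂
  · refine h₂ f a hf0 ?_
    have h3 := mul_le_mul_of_nonneg_left hcmp hα
    have h4 : α * f c₂ + β * f c₂ = f c₂ := by rw [← add_mul, hαβ, one_mul]
    linarith
  · push_neg at hcmp
    refine h₁ f a hf0 ?_
    have h3 := mul_le_mul_of_nonneg_left (le_of_lt hcmp) hβ
    have h4 : α * f c₁ + β * f c₁ = f c₁ := by rw [← add_mul, hαβ, one_mul]
    linarith

theorem dim_ne_one (P : Finset E2) (n : ℕ) (hn : P.card = n) (h6 : 6 ≤ n)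
    (hgp : ∀ p ∈ P, ∀ q ∈ P, ∀ r ∈ P, p ≠ q → p ≠ r → q ≠ r →
      AffineIndependent ℝ ![p, q, r])
    (k : ℕ) (hkc : ⌈(P.card : ℚ) / 3⌉₊ = k) (hk1 : 1 ≤ k) (hkP : k ≤ P.card)
    (hn3 : n ≤ 3 * k) (h3k : 3 * k ≤ n + 2)
    (hdim : setDim {c : E2 | IsCenterpoint P c} = 1) : False := by
  classical
  set D : Set E2 := {c | IsCenterpoint P c} with hD
  have hDc : Convex ℝ D := center_convex P
  have hfr1 : finrank ℝ (vectorSpan ℝ D) = 1 := by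
    have h0 : setDim D = 1 := hdim
    rwa [setDim, direction_affineSpan] at h0
  have hrank : Module.rank ℝ (vectorSpan ℝ D) ≤ 1 := by
    rw [← Module.finrank_eq_rank, hfr1]
    norm_num
  have hcol : Collinear ℝ D := (collinear_iff_rank_le_one ℝ D).2 hrank
  have hnsub : ¬ D.Subsingleton := by
    intro hsub
    have hbot : vectorSpan ℝ D = ⊥ := by
      rcases hsub.eq_empty_or_singleton with h0 | ⟨x, h0⟩ <;>
        simp [h0, vectorSpan_empty, vectorSpan_singleton]
    rw [hbot, finrank_bot] at hfr1
    exact absurd hfr1 (by norm_num)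
  rw [Set.not_subsingleton_iff] at hnsub
  obtain ⟨a, ha, b, hb, hab⟩ := hnsub
  set m : E2 := (1/2 : ℝ) • a + (1/2 : ℝ) • b with hm
  have hmD : m ∈ D := hDc ha hb (by norm_num) (by norm_num) (by norm_num)
  set e : E2 := b - a with he
  have he0 : e ≠ 0 := sub_ne_zero.2 (Ne.symm hab)
  have htight_perp : ∀ u : E2, ‖u‖ = 1 → hfun P k u = ⟪u, m⟫ → ⟪u, e⟫ = 0 := by
    intro u hu htu
    have hma := (isCenterpoint_iff_hfun P k hkc hk1 hkP a).1 ha u hu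
    have hmb := (isCenterpoint_iff_hfun P k hkc hk1 hkP b).1 hb u hu
    have hmid : ⟪u, m⟫ = (1/2) * ⟪u,a⟫ + (1/2) * ⟪u,b⟫ := by
      rw [hm, inner_add_right, real_inner_smul_right, real_inner_smul_right]
    have hsub : ⟪u, e⟫ = ⟪u,b⟫ - ⟪u,a⟫ := by rw [he, inner_sub_right]
    rw [htu] at hma hmb
    linarith [hma, hmb, hmid, hsub]
  set W : Submodule ℝ E2 := (Submodule.span ℝ ({e} : Set E2))ᗮ with hW
  haveI : Fact (finrank ℝ E2 = 1 + 1) := ⟨by simp [finrank_euclideanSpace_fin]⟩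
  have hWrank : finrank ℝ W = 1 := Submodule.finrank_orthogonal_span_singleton he0
  have hWne : W ≠ ⊥ := by
    intro h0
    rw [h0] at hWrank
    simp [finrank_bot] at hWrank
  obtain ⟨w₀, hw₀W, hw₀0⟩ := (Submodule.ne_bot_iff W).1 hWne
  set w : E2 := ‖w₀‖⁻¹ • w₀ with hwdef
  have hwW : w ∈ W := W.smul_mem _ hw₀W
  have hwn : ‖w‖ = 1 := by
    rw [hwdef, norm_smul, norm_inv, norm_norm,
      inv_mul_cancel₀ (norm_ne_zero_iff.2 hw₀0)]
  have hpm : ∀ u : E2, ‖u‖ = 1 → hfun P k u = ⟪u, m⟫ → u = w ∨ u = -w := by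
    intro u hu htu
    have hperp := htight_perp u hu htu
    have huW : u ∈ W := by
      rw [hW, Submodule.mem_orthogonal_singleton_iff_inner_right, real_inner_comm]
      exact hperp
    exact unit_eq_or_neg hWrank huW hwW hu hwn
  obtain ⟨vd, hvd⟩ := (collinear_iff_of_mem ha).1 hcol
  obtain ⟨rb, hrb⟩ := hvd b hb
  have hrb0 : rb ≠ 0 := by
    intro h0
    rw [h0, zero_smul, zero_vadd] at hrb
    exact hab.symm hrb
  have hevd : e = rb • vd := by
    rw [he, hrb, vadd_eq_add]
    abel
  have hblock : ∀ v : E2, ‖v‖ = 1 → v ∈ W →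
      ∃ u, ‖u‖ = 1 ∧ hfun P k u = ⟪u, m⟫ ∧ 0 ≤ ⟪u, v⟫ := by
    intro v hv hvW
    by_contra hcon
    push_neg at hcon
    obtain ⟨ε, hε, hcp⟩ := can_move P k hkc hk1 hkP m v hmD hv
      (fun u h1 h2 => hcon u h1 h2)
    have hmem2 : m + ε • v ∈ D := hcp
    obtain ⟨r₁, hr₁⟩ := hvd _ hmem2
    obtain ⟨r₂, hr₂⟩ := hvd m hmD
    have hdiff : ε • v = (r₁ - r₂) • vd := by
      have h3 : (m + ε • v) - m = (r₁ • vd +ᵥ a) - (r₂ • vd +ᵥ a) := by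
        rw [← hr₁, ← hr₂]
      rw [vadd_eq_add, vadd_eq_add] at h3
      calc ε • v = (m + ε • v) - m := by abel
        _ = (r₁ • vd + a) - (r₂ • vd + a) := h3
        _ = r₁ • vd - r₂ • vd := by abel
        _ = (r₁ - r₂) • vd := (sub_smul r₁ r₂ vd).symm
    have hvvd : ⟪vd, v⟫ = 0 := by
      have h4 : ⟪e, v⟫ = 0 := Submodule.mem_orthogonal_singleton_iff_inner_right.1 hvW
      rw [hevd, real_inner_smul_left] at h4
      rcases mul_eq_zero.1 h4 with h5 | h5
      · exact absurd h5 hrb0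
      · exact h5
    have h5 : ⟪ε • v, v⟫ = 0 := by
      rw [hdiff, real_inner_smul_left, hvvd, mul_zero]
    rw [real_inner_smul_left, real_inner_self_eq_norm_sq, hv] at h5
    norm_num at h5
    exact (ne_of_gt hε) h5
  obtain ⟨u₁, hu₁n, hu₁t, hu₁w⟩ := hblock w hwn hwW
  obtain ⟨u₂, hu₂n, hu₂t, hu₂w⟩ := hblock (-w) (by rw [norm_neg]; exact hwn) (W.neg_mem hwW)
  have h₁ : u₁ = w := by
    rcases hpm u₁ hu₁n hu₁t with h | h
    · exact h
    · exfalso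
      rw [h, inner_neg_left, real_inner_self_eq_norm_sq, hwn] at hu₁w
      norm_num at hu₁w
  have h₂ : u₂ = -w := by
    rcases hpm u₂ hu₂n hu₂t with h | h
    · exfalso
      rw [h, inner_neg_right, real_inner_self_eq_norm_sq, hwn] at hu₂w
      norm_num at hu₂w
    · exact h
  refine antipodal_false P n hn h6 hgp k hk1 hn3 h3k w hwn ⟪w, m⟫
    (le_of_eq (h₁ ▸ hu₁t)) ?_
  have h6' : hfun P k (-w) = ⟪-w, m⟫ := h₂ ▸ hu₂t
  rw [h6', inner_neg_left]


theorem dim0_case (P : Finset E2) (n : ℕ) (hn : P.card = n) (h6 : 6 ≤ n)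
    (hgp : ∀ p ∈ P, ∀ q ∈ P, ∀ r ∈ P, p ≠ q → p ≠ r → q ≠ r →
      AffineIndependent ℝ ![p, q, r])
    (k : ℕ) (hkc : ⌈(P.card : ℚ) / 3⌉₊ = k) (hk1 : 1 ≤ k) (hkP : k ≤ P.card)
    (hn3 : n ≤ 3 * k) (h3k : 3 * k ≤ n + 2)
    (p : E2) (hCp : {c : E2 | IsCenterpoint P c} = {p}) :
    p ∈ P ∧ n = 3 * (k - 1) + 1 ∧ 3 ≤ k := by
  classical
  have hp : IsCenterpoint P p := by
    have h0 : p ∈ ({p} : Set E2) := rfl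
    rw [← hCp] at h0
    exact h0
  set T : Set E2 := {u | ‖u‖ = 1 ∧ hfun P k u = ⟪u, p⟫} with hT
  have hblock : ∀ v : E2, ‖v‖ = 1 → ∃ u ∈ T, 0 ≤ ⟪u, v⟫ := by
    intro v hv
    by_contra hcon
    push_neg at hcon
    obtain ⟨ε, hε, hcp⟩ := can_move P k hkc hk1 hkP p v hp hv
      (fun u h1 h2 => hcon u ⟨h1, h2⟩)
    have hmem : p + ε • v ∈ ({p} : Set E2) := by
      rw [← hCp]
      exact hcp
    rw [Set.mem_singleton_iff] at hmem
    have hz : ε • v = 0 := by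
      have := congrArg (fun x => x - p) hmem
      simpa [add_sub_cancel_left] using this
    rcases smul_eq_zero.1 hz with h0 | h0
    · exact (ne_of_gt hε) h0
    · rw [h0] at hv
      simp at hv
  have hTclosed : IsClosed T := by
    have hTeq : T = Metric.sphere (0:E2) 1 ∩ {u | hfun P k u - ⟪u, p⟫ = 0} := by
      ext u
      simp only [hT, Set.mem_setOf_eq, Set.mem_inter_iff, mem_sphere_zero_iff_norm,
        sub_eq_zero]
    rw [hTeq]
    exact Metric.isClosed_sphere.inter
      (isClosed_eq ((continuous_hfun P k hk1 hkP).sub (continuous_id.inner continuous_const))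
        continuous_const)
  have hTcomp : IsCompact T :=
    IsCompact.of_isClosed_subset (isCompact_sphere 0 1) hTclosed
      (fun u hu => by simpa [mem_sphere_zero_iff_norm] using hu.1)
  have hTne : T.Nonempty := by
    obtain ⟨u, huT, _⟩ := hblock (EuclideanSpace.single 0 1)
      (by simp [EuclideanSpace.norm_single])
    exact ⟨u, huT⟩
  have h0conv : (0:E2) ∈ convexHull ℝ T := by
    by_contra h0
    have hcomp := isCompact_convexHull_E2 hTcomp
    obtain ⟨f, u', hfu, hu0⟩ :=
      geometric_hahn_banach_closed_point (convex_convexHull ℝ T) hcomp.isClosed h0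
    rw [map_zero] at hu0
    set v₁ : E2 := (InnerProductSpace.toDual ℝ E2).symm f with hv₁
    have hv₁x : ∀ x, ⟪v₁, x⟫ = f x := fun x => InnerProductSpace.toDual_symm_apply
    have hneg : ∀ u ∈ T, ⟪v₁, u⟫ < 0 := by
      intro u hu
      rw [hv₁x]
      exact lt_trans (hfu u (subset_convexHull ℝ T hu)) hu0
    have hv₁0 : v₁ ≠ 0 := by
      obtain ⟨u, hu⟩ := hTne
      intro h0'
      have h1 := hneg u hu
      rw [h0', inner_zero_left] at h1
      exact lt_irrefl 0 h1
    set v : E2 := ‖v₁‖⁻¹ • v₁ with hv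
    have hvn : ‖v‖ = 1 := by
      rw [hv, norm_smul, norm_inv, norm_norm, inv_mul_cancel₀ (norm_ne_zero_iff.2 hv₁0)]
    obtain ⟨u, huT, huv⟩ := hblock v hvn
    have hlt : ⟪u, v⟫ < 0 := by
      rw [hv, real_inner_smul_right, real_inner_comm]
      exact mul_neg_of_pos_of_neg (inv_pos.2 (norm_pos_iff.2 hv₁0)) (hneg u huT)
    linarith
  rw [convexHull_eq_union] at h0conv
  simp only [Set.mem_iUnion] at h0conv
  obtain ⟨t, htT, hta, h0t⟩ := h0conv
  have hcard3 : t.card ≤ 3 := by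
    have h1 := hta.card_le_finrank_succ
    have h2 : finrank ℝ (vectorSpan ℝ (Set.range (Subtype.val : t → E2))) ≤ 2 := by
      have h3 := Submodule.finrank_le (vectorSpan ℝ (Set.range (Subtype.val : t → E2)))
      rwa [finrank_euclideanSpace_fin] at h3
    rw [Fintype.card_coe] at h1
    omega
  rw [Finset.convexHull_eq] at h0t
  obtain ⟨w, hw0, hw1, hwx⟩ := h0t
  rw [Finset.centerMass_eq_of_sum_1 _ _ hw1] at hwx
  simp only [id_eq] at hwx
  set t' : Finset E2 := t.filter (fun y => 0 < w y) with ht'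
  have hwzero : ∀ y ∈ t, y ∉ t' → w y = 0 := by
    intro y hy hyn
    rw [ht', Finset.mem_filter] at hyn
    push_neg at hyn
    exact le_antisymm (hyn hy) (hw0 y hy)
  have hsum1' : ∑ y ∈ t', w y = 1 := by
    rw [← hw1]
    exact Finset.sum_subset (Finset.filter_subset _ _) (fun y hy hyn => hwzero y hy hyn)
  have hsumv' : ∑ y ∈ t', w y • y = (0:E2) := by
    rw [← hwx]
    exact Finset.sum_subset (Finset.filter_subset _ _)
      (fun y hy hyn => by rw [hwzero y hy hyn, zero_smul])
  have ht'T : ∀ y ∈ t', y ∈ T :=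
    fun y hy => htT (Finset.mem_coe.2 (Finset.filter_subset _ _ hy))
  have hclaim : ∀ q ∈ P, q ≠ p → ∃ u ∈ t', ⟪u, p⟫ < ⟪u, q⟫ := by
    intro q hqP hqp
    by_contra hcon
    push_neg at hcon
    have hsum0 : ∑ u ∈ t', w u * ⟪u, q - p⟫ = 0 := by
      have heq : ∑ u ∈ t', w u * ⟪u, q - p⟫ = ⟪∑ u ∈ t', w u • u, q - p⟫ := by
        rw [sum_inner]
        refine (Finset.sum_congr rfl (fun u _ => ?_)).symm
        rw [real_inner_smul_left]
      rw [heq, hsumv', inner_zero_left]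
    have hterm : ∀ u ∈ t', w u * ⟪u, q - p⟫ ≤ 0 := by
      intro u hu
      have h1 : ⟪u, q - p⟫ ≤ 0 := by
        rw [inner_sub_right]
        linarith [hcon u hu]
      have h2 := mul_le_mul_of_nonneg_left h1 (hw0 u (Finset.filter_subset _ _ hu))
      rwa [mul_zero] at h2
    have hall0 := (Finset.sum_eq_zero_iff_of_nonpos hterm).1 hsum0
    have hperp : ∀ u ∈ t', ⟪u, q - p⟫ = 0 := by
      intro u hu
      have h2 := hall0 u hu
      have h3 : 0 < w u := (Finset.mem_filter.1 hu).2
      rcases mul_eq_zero.1 h2 with h | h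
      · exact absurd h (ne_of_gt h3)
      · exact h
    have hqp0 : q - p ≠ 0 := sub_ne_zero.2 hqp
    haveI : Fact (finrank ℝ E2 = 1 + 1) := ⟨by simp [finrank_euclideanSpace_fin]⟩
    have hWrank : finrank ℝ ((Submodule.span ℝ ({q - p} : Set E2))ᗮ) = 1 :=
      Submodule.finrank_orthogonal_span_singleton hqp0
    have hmemW : ∀ u ∈ t', u ∈ (Submodule.span ℝ ({q - p} : Set E2))ᗮ := by
      intro u hu
      rw [Submodule.mem_orthogonal_singleton_iff_inner_right, real_inner_comm]
      exact hperp u hu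
    have ht'ne : t'.Nonempty := by
      rcases Finset.eq_empty_or_nonempty t' with h | h
      · rw [h] at hsum1'
        simp at hsum1'
      · exact h
    obtain ⟨u₀, hu₀⟩ := ht'ne
    have hu₀T := ht'T u₀ hu₀
    have hpm : ∀ u ∈ t', u = u₀ ∨ u = -u₀ :=
      fun u hu => unit_eq_or_neg hWrank (hmemW u hu) (hmemW u₀ hu₀) (ht'T u hu).1 hu₀T.1
    by_cases hneg : -u₀ ∈ t'
    · have h1 := (ht'T (-u₀) hneg).2
      have h2 := hu₀T.2
      refine antipodal_false P n hn h6 hgp k hk1 hn3 h3k u₀ hu₀T.1 ⟪u₀, p⟫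
        (le_of_eq h2) ?_
      rw [h1, inner_neg_left]
    · have ht'sub : t' ⊆ {u₀} := by
        intro u hu
        rcases hpm u hu with h | h
        · simp [h]
        · exact absurd (h ▸ hu) hneg
      have ht'eq : t' = {u₀} :=
        Finset.Subset.antisymm ht'sub (Finset.singleton_subset_iff.2 hu₀)
      rw [ht'eq, Finset.sum_singleton] at hsum1' hsumv'
      rw [hsum1', one_smul] at hsumv'
      have h4 := hu₀T.1
      rw [hsumv'] at h4
      simp at h4
  have hcount : ∀ u ∈ t', (P.filter fun q => ⟪u, p⟫ < ⟪u, q⟫).card ≤ k - 1 := by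
    intro u hu
    have h1 := count_lt_of_hfun_le P k hk1 (le_of_eq (ht'T u hu).2)
    omega
  have hsubset : P.filter (fun q => q ≠ p) ⊆
      t'.biUnion (fun u => P.filter fun q => ⟪u, p⟫ < ⟪u, q⟫) := by
    intro q hq
    rw [Finset.mem_filter] at hq
    obtain ⟨u, hu, huq⟩ := hclaim q hq.1 hq.2
    exact Finset.mem_biUnion.2 ⟨u, hu, Finset.mem_filter.2 ⟨hq.1, huq⟩⟩
  have hbig : (P.filter fun q => q ≠ p).card ≤ 3 * (k - 1) := by
    refine le_trans (Finset.card_le_card hsubset) (le_trans Finset.card_biUnion_le ?_)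
    calc ∑ u ∈ t', (P.filter fun q => ⟪u, p⟫ < ⟪u, q⟫).card
        ≤ ∑ _u ∈ t', (k-1) := Finset.sum_le_sum hcount
      _ = t'.card * (k-1) := by rw [Finset.sum_const, smul_eq_mul]
      _ ≤ 3 * (k-1) := Nat.mul_le_mul_right _
          (le_trans (Finset.card_filter_le _ _) hcard3)
  have hpP : p ∈ P := by
    by_contra hpn
    have heq : P.filter (fun q => q ≠ p) = P := by
      apply Finset.filter_true_of_mem
      intro q hq h0
      rw [h0] at hq
      exact hpn hq
    rw [heq, hn] at hbig
    omega
  have hcn : (P.filter fun q => q ≠ p).card = n - 1 := by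
    have heq : P.filter (fun q => q ≠ p) = P.erase p := by
      ext q
      simp [Finset.mem_erase, and_comm]
    rw [heq, Finset.card_erase_of_mem hpP, hn]
  rw [hcn] at hbig
  exact ⟨hpP, by omega, by omega⟩

/-- the center of a set of `n ≥ 6` points in the plane in general position
has dimension `0` or `2`; if it is `0`-dimensional it is a single point of `P`,
and `n = 3k + 1` for some `k ≥ 2`. -/
theorem center_dimension_plane
    (P : Finset (EuclideanSpace ℝ (Fin 2))) (n : ℕ) (hn : P.card = n) (h6 : 6 ≤ n)
    (hgp : ∀ p ∈ P, ∀ q ∈ P, ∀ r ∈ P, p ≠ q → p ≠ r → q ≠ r →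
      AffineIndependent ℝ ![p, q, r])
    (C : Set (EuclideanSpace ℝ (Fin 2))) (hC : C = {c | IsCenterpoint P c}) :
    (setDim C = 0 ∨ setDim C = 2) ∧
    (setDim C = 0 → (∃ p ∈ P, C = {p}) ∧ ∃ k : ℕ, 2 ≤ k ∧ n = 3 * k + 1) := by
  subst hC
  set k : ℕ := ⌈(n : ℚ) / 3⌉₊ with hk
  have hkc : ⌈(P.card : ℚ) / 3⌉₊ = k := by rw [hn, hk]
  obtain ⟨hn3, h3k⟩ := k_facts n h6
  rw [← hk] at hn3 h3k
  have hk1 : 1 ≤ k := by omega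
  have hkP : k ≤ P.card := by omega
  obtain ⟨c₀, hc₀⟩ := exists_centerpoint P n hn h6 k hkc hk1 hn3 h3k
  have hdim2 : setDim {c : E2 | IsCenterpoint P c} ≤ 2 := by
    rw [setDim]
    have h1 := Submodule.finrank_le (affineSpan ℝ {c : E2 | IsCenterpoint P c}).direction
    rwa [finrank_euclideanSpace_fin] at h1
  have hne1 : setDim {c : E2 | IsCenterpoint P c} ≠ 1 :=
    fun h => dim_ne_one P n hn h6 hgp k hkc hk1 hkP hn3 h3k h
  constructor
  · have hgoal : setDim {c : E2 | IsCenterpoint P c} = 0 ∨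
        setDim {c : E2 | IsCenterpoint P c} = 2 := by omega
    exact hgoal
  · intro hdim0
    have hsing : {c : E2 | IsCenterpoint P c} = {c₀} := by
      apply Set.eq_singleton_iff_unique_mem.2 ⟨hc₀, ?_⟩
      intro x hx
      have hd0 : (affineSpan ℝ {c : E2 | IsCenterpoint P c}).direction = ⊥ := by
        rw [setDim] at hdim0
        exact Submodule.finrank_eq_zero.1 hdim0
      have hx' : x ∈ affineSpan ℝ {c : E2 | IsCenterpoint P c} := subset_affineSpan ℝ _ hx
      have hc' : c₀ ∈ affineSpan ℝ {c : E2 | IsCenterpoint P c} := subset_affineSpan ℝ _ hc₀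
      have hmem := AffineSubspace.vsub_mem_direction hx' hc'
      rw [hd0] at hmem
      have h0 : x - c₀ = 0 := by simpa using hmem
      have := sub_eq_zero.1 h0
      exact this
    obtain ⟨hpP, hneq, hk3⟩ := dim0_case P n hn h6 hgp k hkc hk1 hkP hn3 h3k c₀ hsing
    exact ⟨⟨c₀, hpP, hsing⟩, k - 1, by omega, hneq⟩
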